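/- Let n be an odd positive integer all of whose prime divisors are congruent to 3 modulo 8. Then there exists k ≥ 0 with 2^k ≡ −1 (mod n). The same conclusion holds if all prime divisors of n are congruent to 5 modulo 8. Conversely, if n has a prime divisor congruent to 7 modulo 8, or has prime divisors p ≡ 3 (mod 8) and q ≡ 5 (mod 8) simultaneously, then no such k exists. -/

import Mathlib

lemma pp_lemma (p e : ℕ) (hp : p.Prime) (h8 : p % 8 = 3 ∨ p % 8 = 5) (he : 0 < e) :
    (2:ℤ) ^ (p ^ (e-1) * (p / 2)) ≡ -1 [ZMOD ((p:ℤ) ^ e)] := by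
  haveI : Fact p.Prime := ⟨hp⟩
  have hp2 : p ≠ 2 := by omega
  have hpodd : p % 2 = 1 := by omega
  set m : ℕ := p ^ (e-1) * (p / 2) with hmdef
  have h2p : 2 * (p / 2) = p - 1 := by omega
  have htot : 2 * m = Nat.totient (p ^ e) := by
    rw [Nat.totient_prime_pow hp he, hmdef, mul_left_comm, h2p]
  -- Euler's theorem
  have heuler : (2:ℤ) ^ (2 * m) ≡ 1 [ZMOD ((p:ℤ) ^ e)] := by
    have hc : Nat.Coprime 2 (p ^ e) :=
      Nat.coprime_two_left.mpr (Odd.pow (Nat.odd_iff.mpr hpodd))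
    have hnat := Nat.ModEq.pow_totient hc
    rw [← htot] at hnat
    have hint := Int.natCast_modEq_iff.mpr hnat
    push_cast at hint
    exact hint
  have hdvd : ((p:ℤ) ^ e) ∣ ((2:ℤ) ^ m - 1) * ((2:ℤ) ^ m + 1) := by
    have h := heuler.dvd
    have : ((2:ℤ) ^ m - 1) * ((2:ℤ) ^ m + 1) = -(1 - (2:ℤ)^(2*m)) := by
      rw [two_mul, pow_add]; ring
    rw [this]
    exact dvd_neg.mpr h
  have hnd : ¬ (p:ℤ) ∣ ((2:ℤ) ^ m - 1) := by
    intro hd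
    have hmod : ((2:ℤ) ^ m : ZMod p) = 1 := by
      have : ((2:ℤ) ^ m : ℤ) ≡ 1 [ZMOD (p:ℤ)] :=
        (Int.modEq_of_dvd (by simpa using hd)).symm
      have := (ZMod.intCast_eq_intCast_iff _ _ _).mpr this
      simpa using this
    have hz : (2 : ZMod p) ^ m = 1 := by push_cast at hmod; exact hmod
    have h2ne : (2 : ZMod p) ≠ 0 := by
      intro h
      have h2 := (ZMod.natCast_eq_zero_iff 2 p).mp (by push_cast; exact h)
      have := (Nat.prime_dvd_prime_iff_eq hp Nat.prime_two).mp h2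
      exact hp2 this
    have hd1 : orderOf (2 : ZMod p) ∣ m := orderOf_dvd_of_pow_eq_one hz
    have hd2 : orderOf (2 : ZMod p) ∣ p - 1 := ZMod.orderOf_dvd_card_sub_one h2ne
    have hcop : Nat.Coprime (orderOf (2 : ZMod p)) (p ^ (e-1)) := by
      apply Nat.Coprime.pow_right
      rw [Nat.coprime_comm, hp.coprime_iff_not_dvd]
      intro hpd
      have h2le := hp.two_le
      have := Nat.le_of_dvd (by omega) (hpd.trans hd2)
      omega
    have hd3 : orderOf (2 : ZMod p) ∣ p / 2 := by
      exact (Nat.Coprime.dvd_of_dvd_mul_left hcop (by rw [← hmdef]; exact hd1))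
    have hpow : (2 : ZMod p) ^ (p / 2) = 1 := orderOf_dvd_iff_pow_eq_one.mp hd3
    have hsq : IsSquare (2 : ZMod p) := (ZMod.euler_criterion p h2ne).mpr hpow
    have := (ZMod.exists_sq_eq_two_iff hp2).mp hsq
    omega
  have hprime : Prime ((p:ℤ)) := Nat.prime_iff_prime_int.mp hp
  have hfinal : ((p:ℤ) ^ e) ∣ ((2:ℤ) ^ m + 1) :=
    hprime.pow_dvd_of_dvd_mul_left e hnd hdvd
  rw [Int.modEq_iff_dvd]
  have : (-1 : ℤ) - 2 ^ m = -(2 ^ m + 1) := by ring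
  rw [this]
  exact dvd_neg.mpr hfinal

lemma glue_lemma (c : ℕ) : ∀ n : ℕ, 0 < n →
    (∀ p e : ℕ, p.Prime → 0 < e → p ^ e ∣ n →
      ∃ u, Odd u ∧ (2:ℤ) ^ (c * u) ≡ -1 [ZMOD ((p:ℤ) ^ e)]) →
    ∃ u, Odd u ∧ (2:ℤ) ^ (c * u) ≡ -1 [ZMOD (n : ℤ)] := by
  intro n
  induction n using Nat.strong_induction_on with
  | _ n ih =>
    intro hn hyp
    rcases eq_or_lt_of_le (Nat.succ_le_of_lt hn) with h1 | h1
    · exact ⟨1, odd_one, by rw [← h1]; exact Int.modEq_one⟩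
    · set p := n.minFac with hpdef
      have hp : p.Prime := Nat.minFac_prime (by omega)
      set e := n.factorization p with hedef
      have hep : 0 < e := hp.factorization_pos_of_dvd (by omega) (Nat.minFac_dvd n)
      set m := n / p ^ e with hmdef
      have hsplit : p ^ e * m = n := Nat.ordProj_mul_ordCompl_eq_self n p
      have hnd : ¬ p ∣ m := Nat.not_dvd_ordCompl hp (by omega)
      have hm_pos : 0 < m := by
        rcases Nat.eq_zero_or_pos m with h | h
        · rw [h, mul_zero] at hsplit; omega
        · exact h
      have hpe_gt : 1 < p ^ e := by
        have := hp.two_le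
        calc 1 < p := by omega
        _ ≤ p ^ e := Nat.le_self_pow hep.ne' p
      have hm_lt : m < n := by
        rw [← hsplit]
        calc m = 1 * m := (one_mul m).symm
        _ < p ^ e * m := (Nat.mul_lt_mul_right hm_pos).mpr hpe_gt
      have hmdvd : m ∣ n := ⟨p ^ e, by rw [mul_comm]; exact hsplit.symm⟩
      obtain ⟨u1, hu1o, hu1⟩ := ih m hm_lt hm_pos
        (fun q f hq hf hdvd => hyp q f hq hf (hdvd.trans hmdvd))
      obtain ⟨u2, hu2o, hu2⟩ := hyp p e hp hep (Nat.ordProj_dvd n p)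
      refine ⟨u1 * u2, hu1o.mul hu2o, ?_⟩
      have hcongr1 : (2:ℤ) ^ (c * (u1 * u2)) ≡ -1 [ZMOD (m:ℤ)] := by
        calc (2:ℤ) ^ (c * (u1 * u2)) = ((2:ℤ) ^ (c * u1)) ^ u2 := by
              rw [← pow_mul]; ring_nf
        _ ≡ (-1) ^ u2 [ZMOD (m:ℤ)] := hu1.pow u2
        _ = -1 := hu2o.neg_one_pow
      have hcongr2 : (2:ℤ) ^ (c * (u1 * u2)) ≡ -1 [ZMOD ((p:ℤ) ^ e)] := by
        calc (2:ℤ) ^ (c * (u1 * u2)) = ((2:ℤ) ^ (c * u2)) ^ u1 := by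
              rw [← pow_mul]; ring_nf
        _ ≡ (-1) ^ u1 [ZMOD ((p:ℤ) ^ e)] := hu2.pow u1
        _ = -1 := hu1o.neg_one_pow
      have hcop : IsCoprime ((p:ℤ) ^ e) (m:ℤ) := by
        have hc : Nat.Coprime (p ^ e) m :=
          Nat.Coprime.pow_left e (hp.coprime_iff_not_dvd.mpr hnd)
        have := hc.isCoprime
        push_cast at this ⊢
        exact this
      rw [Int.modEq_iff_dvd]
      have := hcop.mul_dvd hcongr2.dvd hcongr1.dvd
      have hcast : ((p:ℤ) ^ e) * (m:ℤ) = (n:ℤ) := by exact_mod_cast congrArg (Nat.cast : ℕ → ℤ) hsplit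
      rwa [hcast] at this

theorem neg_one_power_of_two_mod_n (n : ℕ) (hn : 0 < n) (hodd : Odd n) :
    ((∀ p : ℕ, p.Prime → p ∣ n → p % 8 = 3) →
        ∃ k : ℕ, (2 : ℤ) ^ k ≡ -1 [ZMOD (n : ℤ)]) ∧
      ((∀ p : ℕ, p.Prime → p ∣ n → p % 8 = 5) →
        ∃ k : ℕ, (2 : ℤ) ^ k ≡ -1 [ZMOD (n : ℤ)]) ∧
      ((∃ p : ℕ, p.Prime ∧ p ∣ n ∧ p % 8 = 7) →
        ¬ ∃ k : ℕ, (2 : ℤ) ^ k ≡ -1 [ZMOD (n : ℤ)]) ∧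
      ((∃ p q : ℕ, p.Prime ∧ q.Prime ∧ p ∣ n ∧ q ∣ n ∧ p % 8 = 3 ∧ q % 8 = 5) →
        ¬ ∃ k : ℕ, (2 : ℤ) ^ k ≡ -1 [ZMOD (n : ℤ)]) := by
  have key : ∀ k : ℕ, ∀ p : ℕ, p.Prime → p ∣ n → (2:ℤ) ^ k ≡ -1 [ZMOD (n:ℤ)] →
      (2 : ZMod p) ^ k = -1 := by
    intro k p hp hpn hk
    have hmod : (2:ℤ) ^ k ≡ -1 [ZMOD (p:ℤ)] := hk.of_dvd (by exact_mod_cast hpn)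
    have := (ZMod.intCast_eq_intCast_iff _ _ _).mpr hmod
    push_cast at this
    exact this
  refine ⟨?_, ?_, ?_, ?_⟩
  · -- all primes 3 mod 8
    intro h3
    obtain ⟨u, _, hu⟩ := glue_lemma 1 n hn (fun p e hp hep hdvd => by
      have hpn : p ∣ n := (dvd_pow_self p hep.ne').trans hdvd
      have h8 := h3 p hp hpn
      refine ⟨p ^ (e-1) * (p / 2), ?_, ?_⟩
      · have h1 : Odd p := Nat.odd_iff.mpr (by omega)
        have h2 : Odd (p / 2) := Nat.odd_iff.mpr (by omega)
        exact (h1.pow).mul h2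
      · rw [one_mul]; exact pp_lemma p e hp (Or.inl h8) hep)
    exact ⟨1 * u, hu⟩
  · -- all primes 5 mod 8
    intro h5
    obtain ⟨u, _, hu⟩ := glue_lemma 2 n hn (fun p e hp hep hdvd => by
      have hpn : p ∣ n := (dvd_pow_self p hep.ne').trans hdvd
      have h8 := h5 p hp hpn
      refine ⟨p ^ (e-1) * (p / 4), ?_, ?_⟩
      · have h1 : Odd p := Nat.odd_iff.mpr (by omega)
        have h2 : Odd (p / 4) := Nat.odd_iff.mpr (by omega)
        exact (h1.pow).mul h2
      · have hexp : 2 * (p ^ (e-1) * (p / 4)) = p ^ (e-1) * (p / 2) := by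
          rw [mul_left_comm]
          congr 1
          omega
        rw [hexp]
        exact pp_lemma p e hp (Or.inr h8) hep)
    exact ⟨2 * u, hu⟩
  · -- a prime 7 mod 8
    rintro ⟨p, hp, hpn, h8⟩ ⟨k, hk⟩
    haveI : Fact p.Prime := ⟨hp⟩
    haveI : Fact (2 < p) := ⟨by omega⟩
    have hz : (2 : ZMod p) ^ k = -1 := key k p hp hpn hk
    have hp2 : p ≠ 2 := by omega
    have h2ne : (2 : ZMod p) ≠ 0 := by
      intro h
      have := (ZMod.natCast_eq_zero_iff 2 p).mp (by push_cast; exact h)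
      have := Nat.le_of_dvd (by norm_num) this
      omega
    have hsq : IsSquare (2 : ZMod p) := (ZMod.exists_sq_eq_two_iff hp2).mpr (Or.inr h8)
    have h1 : (2 : ZMod p) ^ (p / 2) = 1 := ((ZMod.euler_criterion p h2ne).mp hsq)
    have hodd' : Odd (p / 2) := Nat.odd_iff.mpr (by omega)
    have : (-1 : ZMod p) = 1 := by
      calc (-1 : ZMod p) = (-1 : ZMod p) ^ (p / 2) := (hodd'.neg_one_pow).symm
      _ = ((2 : ZMod p) ^ k) ^ (p / 2) := by rw [hz]
      _ = ((2 : ZMod p) ^ (p / 2)) ^ k := by rw [← pow_mul, ← pow_mul, mul_comm]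
      _ = 1 := by rw [h1, one_pow]
    exact ZMod.neg_one_ne_one this
  · -- primes 3 and 5 mod 8
    rintro ⟨p, q, hp, hq, hpn, hqn, hp8, hq8⟩ ⟨k, hk⟩
    haveI : Fact p.Prime := ⟨hp⟩
    haveI : Fact q.Prime := ⟨hq⟩
    have hzp : (2 : ZMod p) ^ k = -1 := key k p hp hpn hk
    have hzq : (2 : ZMod q) ^ k = -1 := key k q hq hqn hk
    have hkodd : Odd k := by
      by_contra h
      obtain ⟨j, hj⟩ := Nat.not_odd_iff_even.mp h
      have : IsSquare (-1 : ZMod p) := ⟨(2 : ZMod p) ^ j, by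
        rw [← hzp, hj, pow_add]⟩
      have := ZMod.exists_sq_eq_neg_one_iff.mp this
      omega
    obtain ⟨j, hj⟩ := hkodd
    have hq2 : q ≠ 2 := by omega
    have hsm : IsSquare (-1 : ZMod q) := ZMod.exists_sq_eq_neg_one_iff.mpr (by omega)
    obtain ⟨y, hy⟩ := hsm
    have hsq2 : IsSquare (2 : ZMod q) := by
      refine ⟨y * 2 ^ (j+1), ?_⟩
      have : (2 : ZMod q) ^ (2 * j + 2) = -2 := by
        rw [show 2 * j + 2 = k + 1 by omega, pow_succ, hzq]; ring
      calc (2 : ZMod q) = (-1) * (-2) := by ring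
      _ = (y * y) * ((2:ZMod q) ^ (2*j+2)) := by rw [← hy, this]
      _ = (y * 2 ^ (j+1)) * (y * 2 ^ (j+1)) := by
          rw [show 2*j+2 = (j+1)+(j+1) by omega, pow_add]; ring
    have := (ZMod.exists_sq_eq_two_iff hq2).mp hsq2
    omega
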